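/- Let h be a simplicial automorphism of the Farey graph F (vertices: pairs (p,q) of coprime integers up to sign, i.e. slopes in ℚ ∪ {∞}; edges between (p,q) and (r,s) when |ps − rq| = 1). If h fixes the vertices (0,1) and (1,0), and h maps some vertex (s,1) with s > 0 to a vertex (t,1) with t > 0, then h is the identity. -/

import Mathlib

/-- The coprime pair of integers representing a Farey vertex: `none` is `∞ = (1,0)`
and a rational `p/q` in lowest terms is `(p, q)`. -/
def fareyPair : Option ℚ → ℤ × ℤ
  | none => (1, 0)
  | some x => (x.num, (x.den : ℤ))

/-- Adjacency in the Farey graph: `(p,q)` and `(r,s)` are joined iff `|ps - rq| = 1`. -/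
def FareyAdj (u v : Option ℚ) : Prop :=
  |(fareyPair u).1 * (fareyPair v).2 - (fareyPair v).1 * (fareyPair u).2| = 1

lemma adj_int (m n : ℤ) : FareyAdj (some (m:ℚ)) (some (n:ℚ)) ↔ |m - n| = 1 := by
  simp [FareyAdj, fareyPair]

lemma adj_none (y : ℚ) (hy : FareyAdj none (some y)) : y.den = 1 := by
  simp [FareyAdj, fareyPair] at hy
  exact_mod_cast hy

/-- common neighbors of an edge -/
lemma cn (a b c d p q : ℤ) (hdet : a*d - b*c = 1 ∨ a*d - b*c = -1)
    (h1 : |a*q - p*b| = 1) (h2 : |c*q - p*d| = 1) :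
    (p = a+c ∧ q = b+d) ∨ (p = -(a+c) ∧ q = -(b+d)) ∨
    (p = a-c ∧ q = b-d) ∨ (p = -(a-c) ∧ q = -(b-d)) := by
  have hp : p * (a*d - b*c) = (a*q - p*b)*c - (c*q - p*d)*a := by ring
  have hq : q * (a*d - b*c) = (a*q - p*b)*d - (c*q - p*d)*b := by ring
  have h1' := (abs_eq (by norm_num : (0:ℤ) ≤ 1)).mp h1
  have h2' := (abs_eq (by norm_num : (0:ℤ) ≤ 1)).mp h2
  rcases hdet with hd | hd <;> rw [hd] at hp hq <;>
    rcases h1' with h1' | h1' <;> rw [h1'] at hp hq <;>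
    rcases h2' with h2' | h2' <;> rw [h2'] at hp hq <;> omega

/-- rigidity of the integer path graph -/
lemma int_path_aux (φ : ℤ → ℤ) (hinj : Function.Injective φ)
    (hadj : ∀ m n : ℤ, |φ m - φ n| = 1 ↔ |m - n| = 1)
    (h0 : φ 0 = 0) (h1 : φ 1 = 1) : ∀ n : ℤ, φ n = n := by
  have pos : ∀ k : ℕ, φ (k : ℤ) = (k:ℤ) ∧ φ ((k:ℤ)+1) = (k:ℤ)+1 := by
    intro k
    induction k with
    | zero => simpa using ⟨h0, h1⟩
    | succ k ih =>
      obtain ⟨hk, hk1⟩ := ih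
      have ha : |φ ((k:ℤ)+1+1) - φ ((k:ℤ)+1)| = 1 := (hadj _ _).mpr (by simp)
      rw [hk1] at ha
      have ha' := (abs_eq (by norm_num : (0:ℤ) ≤ 1)).mp ha
      have hval : φ ((k:ℤ)+1+1) = (k:ℤ)+1+1 := by
        rcases ha' with hx | hx
        · linarith
        · exfalso
          have : φ ((k:ℤ)+1+1) = φ (k:ℤ) := by rw [hk]; linarith
          have := hinj this
          omega
      constructor
      · push_cast; exact hk1
      · push_cast; exact hval
  have neg : ∀ k : ℕ, φ (-(k:ℤ)) = -(k:ℤ) ∧ φ (-(k:ℤ)-1) = -(k:ℤ)-1 := by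
    intro k
    induction k with
    | zero =>
      refine ⟨by simpa using h0, ?_⟩
      have ha : |φ ((0:ℤ)-1) - φ 0| = 1 := (hadj _ _).mpr (by norm_num)
      rw [h0] at ha
      have ha' := (abs_eq (by norm_num : (0:ℤ) ≤ 1)).mp ha
      have : φ ((0:ℤ)-1) = -1 := by
        rcases ha' with hx | hx
        · exfalso
          have : φ ((0:ℤ)-1) = φ 1 := by rw [h1]; linarith
          have := hinj this
          omega
        · linarith
      simpa using this
    | succ k ih =>
      obtain ⟨hk, hk1⟩ := ih
      have ha : |φ (-(k:ℤ)-1-1) - φ (-(k:ℤ)-1)| = 1 := (hadj _ _).mpr (by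
        rw [show (-(k:ℤ)-1-1) - (-(k:ℤ)-1) = -1 by ring]; norm_num)
      rw [hk1] at ha
      have ha' := (abs_eq (by norm_num : (0:ℤ) ≤ 1)).mp ha
      have hval : φ (-(k:ℤ)-1-1) = -(k:ℤ)-1-1 := by
        rcases ha' with hx | hx
        · exfalso
          have : φ (-(k:ℤ)-1-1) = φ (-(k:ℤ)) := by rw [hk]; linarith
          have := hinj this
          omega
        · linarith
      constructor
      · push_cast
        rw [show -((k:ℤ)+1) = -(k:ℤ)-1 by ring]; exact hk1
      · push_cast
        rw [show -((k:ℤ)+1)-1 = -(k:ℤ)-1-1 by ring]; exact hval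
  intro n
  rcases le_or_gt 0 n with hn | hn
  · have := (pos n.toNat).1
    rwa [Int.toNat_of_nonneg hn] at this
  · have := (neg (-n).toNat).1
    rw [Int.toNat_of_nonneg (by omega : (0:ℤ) ≤ -n)] at this
    simpa using this

/-- Existence of a parent pair in the Stern-Brocot sense. -/
lemma parents (p Q : ℤ) (hQ : 2 ≤ Q) (hcop : IsCoprime p Q) :
    ∃ u v : ℤ, 1 ≤ v ∧ v ≤ Q - 1 ∧ p * v - Q * u = 1 := by
  obtain ⟨a, b, hab⟩ := hcop
  refine ⟨-(b + p * (a / Q)), a % Q, ?_, ?_, ?_⟩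
  · rcases (Int.emod_nonneg a (by omega : Q ≠ 0)).lt_or_eq with hlt | heq
    · omega
    · exfalso
      have hbez : p * (a % Q) - Q * (-(b + p * (a / Q))) = 1 := by
        rw [Int.emod_def]; linear_combination hab
      rw [← heq] at hbez
      have hdQ : Q ∣ 1 := ⟨b + p * (a / Q), by linarith⟩
      have := Int.le_of_dvd one_pos hdQ
      omega
  · have := Int.emod_lt_of_pos a (by omega : (0:ℤ) < Q)
    omega
  · rw [Int.emod_def]; linear_combination hab

/-- An automorphism of the Farey graph fixing `0 = (0,1)` and `∞ = (1,0)` and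
sending some vertex `(s,1)` with `s > 0` to a vertex `(t,1)` with `t > 0` is the
identity. -/
theorem farey_rigidity (h : Option ℚ ≃ Option ℚ)
    (hadj : ∀ u v : Option ℚ, FareyAdj (h u) (h v) ↔ FareyAdj u v)
    (h0 : h (some 0) = some 0) (hinf : h none = none)
    (hpos : ∃ s t : ℤ, 0 < s ∧ 0 < t ∧ h (some (s : ℚ)) = some (t : ℚ)) :
    h = Equiv.refl (Option ℚ) := by
  obtain ⟨s, t, hs, ht, hst⟩ := hpos
  -- h maps integers to integers
  have himg : ∀ n : ℤ, ∃ m : ℤ, h (some (n:ℚ)) = some ((m:ℚ)) := by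
    intro n
    have hadj0 : FareyAdj (h none) (h (some (n:ℚ))) :=
      (hadj _ _).mpr (by simp [FareyAdj, fareyPair])
    rw [hinf] at hadj0
    cases hy : h (some (n:ℚ)) with
    | none => exact absurd (h.injective (hy.trans hinf.symm)) (by simp)
    | some y =>
      rw [hy] at hadj0
      have hden := adj_none y hadj0
      exact ⟨y.num, congrArg some ((Rat.den_eq_one_iff y).mp hden).symm⟩
  set φ : ℤ → ℤ := fun n => (himg n).choose with hφdef
  have hφ : ∀ n : ℤ, h (some (n:ℚ)) = some ((φ n : ℤ) : ℚ) := fun n => (himg n).choose_spec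
  have hφinj : Function.Injective φ := by
    intro m n hmn
    have : h (some (m:ℚ)) = h (some (n:ℚ)) := by rw [hφ, hφ, hmn]
    have := h.injective this
    exact_mod_cast Option.some_injective _ this
  have hφadj : ∀ m n : ℤ, |φ m - φ n| = 1 ↔ |m - n| = 1 := by
    intro m n
    rw [← adj_int, ← adj_int m n, ← hφ, ← hφ]
    exact hadj _ _
  have hφ0 : φ 0 = 0 := by
    have := (hφ 0).symm.trans (by rw [show ((0:ℤ):ℚ) = (0:ℚ) by norm_num, h0])
    have := Option.some_injective _ this
    exact_mod_cast this
  have hφst : φ s = t := by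
    have := (hφ s).symm.trans hst
    have := Option.some_injective _ this
    exact_mod_cast this
  have hφ1 : φ 1 = 1 ∨ φ 1 = -1 := by
    have := (hφadj 1 0).mpr (by norm_num)
    rw [hφ0, sub_zero] at this
    exact (abs_eq (by norm_num : (0:ℤ) ≤ 1)).mp this
  have hφid : ∀ n : ℤ, φ n = n := by
    rcases hφ1 with h1 | h1
    · exact int_path_aux φ hφinj hφadj hφ0 h1
    · exfalso
      have := int_path_aux (fun n => -φ n)
        (fun a b hab => hφinj (by simpa using hab))
        (fun m n => by rw [show -φ m - -φ n = -(φ m - φ n) by ring, abs_neg]; exact hφadj m n)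
        (by simp [hφ0]) (by simp [h1])
      have := this s
      omega
  have Hint : ∀ n : ℤ, h (some (n:ℚ)) = some ((n:ℚ)) := by
    intro n; rw [hφ, hφid]
  -- main strong induction on denominator
  have main : ∀ q : ℕ, ∀ x : ℚ, x.den = q → h (some x) = some x := by
    intro q
    induction q using Nat.strong_induction_on with
    | _ q IH =>
      intro x hxq
      have hd1 : 1 ≤ x.den := x.pos
      by_cases hq1 : x.den = 1
      · have hx : ((x.num : ℚ)) = x := (Rat.den_eq_one_iff x).mp hq1
        rw [← hx]; exact Hint x.num
      · -- denominator at least 2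
        set p : ℤ := x.num with hp
        set Q : ℤ := (x.den : ℤ) with hQdef
        have hQ2 : 2 ≤ Q := by omega
        have hcop : IsCoprime p Q := by
          rw [Int.isCoprime_iff_gcd_eq_one]
          simpa [Int.gcd, hp, hQdef, Nat.Coprime] using x.reduced
        obtain ⟨u, v, hv1, hvQ1, hbez⟩ := parents p Q hQ2 hcop
        have hv0 : 0 ≤ v := by omega
        have hvQ : v < Q := by omega
        -- parent A = u / v
        have hcopA : Nat.Coprime u.natAbs v.toNat := by
          have hC : IsCoprime u v := ⟨-Q, p, by linarith⟩
          have hg := Int.isCoprime_iff_gcd_eq_one.mp hC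
          simp only [Int.gcd] at hg
          rwa [show v.toNat = v.natAbs by omega]
        set A : ℚ := ⟨u, v.toNat, by omega, hcopA⟩ with hA
        have hAnum : A.num = u := rfl
        have hAden : (A.den : ℤ) = v := by
          show ((v.toNat : ℕ) : ℤ) = v
          omega
        -- parent B = (p-u) / (Q-v)
        have hcopB : Nat.Coprime (p-u).natAbs (Q-v).toNat := by
          have hC : IsCoprime (p-u) (Q-v) := ⟨Q, -p, by linarith⟩
          have hg := Int.isCoprime_iff_gcd_eq_one.mp hC
          simp only [Int.gcd] at hg
          rwa [show (Q-v).toNat = (Q-v).natAbs by omega]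
        set B : ℚ := ⟨p-u, (Q-v).toNat, by omega, hcopB⟩ with hB
        have hBnum : B.num = p - u := rfl
        have hBden : (B.den : ℤ) = Q - v := by
          show (((Q-v).toNat : ℕ) : ℤ) = Q - v
          omega
        -- A, B are adjacent to x and to each other
        have hAx : FareyAdj (some A) (some x) := by
          show |A.num * ((x.den:ℕ):ℤ) - x.num * (A.den:ℤ)| = 1
          rw [hAnum, hAden, show u * ((x.den:ℕ):ℤ) - x.num * v = -1 by
            rw [← hp, ← hQdef]; linear_combination -hbez]
          norm_num
        have hBx : FareyAdj (some B) (some x) := by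
          show |B.num * ((x.den:ℕ):ℤ) - x.num * (B.den:ℤ)| = 1
          rw [hBnum, hBden, show (p - u) * ((x.den:ℕ):ℤ) - x.num * (Q - v) = 1 by
            rw [← hp, ← hQdef]; linear_combination hbez]
          norm_num
        -- h fixes A and B by induction
        have hAsmall : A.den < q := by
          have : (A.den : ℤ) = v := hAden
          omega
        have hBsmall : B.den < q := by
          have : (B.den : ℤ) = Q - v := hBden
          omega
        have hAfix : h (some A) = some A := IH A.den hAsmall A rfl
        have hBfix : h (some B) = some B := IH B.den hBsmall B rfl
        -- the image of x is a common neighbor of A and B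
        have hyadj1 : FareyAdj (some A) (h (some x)) := by
          have := (hadj (some A) (some x)).mpr hAx
          rwa [hAfix] at this
        have hyadj2 : FareyAdj (some B) (h (some x)) := by
          have := (hadj (some B) (some x)).mpr hBx
          rwa [hBfix] at this
        cases hhx : h (some x) with
        | none => exact absurd (h.injective (hhx.trans hinf.symm)) (by simp)
        | some y =>
          rw [hhx] at hyadj1 hyadj2
          have h1 : |u * (y.den:ℤ) - y.num * v| = 1 := by
            have : |A.num * (y.den:ℤ) - y.num * (A.den:ℤ)| = 1 := hyadj1
            rwa [hAnum, hAden] at this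
          have h2 : |(p-u) * (y.den:ℤ) - y.num * (Q-v)| = 1 := by
            have : |B.num * (y.den:ℤ) - y.num * (B.den:ℤ)| = 1 := hyadj2
            rwa [hBnum, hBden] at this
          have hdet : u*(Q-v) - v*(p-u) = 1 ∨ u*(Q-v) - v*(p-u) = -1 :=
            Or.inr (by linear_combination -hbez)
          have hyp := y.pos
          have hcases := cn u v (p-u) (Q-v) y.num (y.den:ℤ) hdet h1 h2
          rcases hcases with ⟨hP, hQz⟩ | ⟨hP, hQz⟩ | ⟨hP, hQz⟩ | ⟨hP, hQz⟩
          · -- y = x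
            have hnum : y.num = x.num := by omega
            have hden : y.den = x.den := by omega
            exact congrArg some (Rat.ext hnum hden)
          · exfalso; omega
          · -- smaller denominator : contradiction
            exfalso
            have hyd : y.den < q := by omega
            have hfix := IH y.den hyd y rfl
            have := h.injective (hhx.trans hfix.symm)
            have hxy : x = y := Option.some_injective _ this
            rw [hxy] at hxq
            omega
          · exfalso
            have hyd : y.den < q := by omega
            have hfix := IH y.den hyd y rfl
            have := h.injective (hhx.trans hfix.symm)
            have hxy : x = y := Option.some_injective _ this
            rw [hxy] at hxq
            omega
  apply Equiv.ext
  intro z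
  cases z with
  | none => simpa using hinf
  | some x => simpa using main x.den x rfl
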